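/- Let τ = τ⁰-τ¹-⋯-τˢ and φ = φ⁰-φ¹-⋯-φˢ be multi-patterns such that the sequence of blocks (φ⁰, φ¹, …, φˢ) is a permutation of the sequence of blocks (τ⁰, τ¹, …, τˢ). Then for every n ≥ 0 and k ≥ 1, the number of k-ary words of length n avoiding τ equals the number of k-ary words of length n avoiding φ. -/

import Mathlib

/-- A word `σ : Fin n → Fin k` has an occurrence of the subword pattern `p : Fin m → Fin l`
at position `i` if `i + m ≤ n` and the corresponding letters are order-isomorphic to `p`. -/
def OccursAt {m l n k : ℕ} (p : Fin m → Fin l) (σ : Fin n → Fin k) (i : ℕ) : Prop :=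
  ∃ h : i + m ≤ n, ∀ a b : Fin m,
    (σ ⟨i + a, lt_of_lt_of_le (Nat.add_lt_add_left a.isLt i) h⟩ <
      σ ⟨i + b, lt_of_lt_of_le (Nat.add_lt_add_left b.isLt i) h⟩) ↔ p a < p b

/-- `σ` avoids the subword pattern `p`. -/
def AvoidsPat {m l n k : ℕ} (p : Fin m → Fin l) (σ : Fin n → Fin k) : Prop :=
  ∀ i : ℕ, ¬ OccursAt p σ i

/-- `σ` contains the multi-pattern `τ⁰-τ¹-⋯` (blocks indexed by `Fin s`): there are
positions `i j`, with each block's occurrence ending before the next block's start,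
such that `τ j` occurs at `i j` for every `j`. -/
def ContainsMulti {s : ℕ} {m r : Fin s → ℕ} (τ : ∀ j : Fin s, Fin (m j) → Fin (r j))
    {n k : ℕ} (σ : Fin n → Fin k) : Prop :=
  ∃ i : Fin s → ℕ,
    (∀ (j : Fin s) (h : (j : ℕ) + 1 < s), i j + m j ≤ i ⟨(j : ℕ) + 1, h⟩) ∧
      ∀ j : Fin s, OccursAt (τ j) σ (i j)

attribute [local instance] Classical.propDecidable

noncomputable section

def cnt (n k : ℕ) (P : (Fin n → Fin k) → Prop) : ℕ :=
  (Finset.univ.filter P).card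

def leftW {n k : ℕ} (t : ℕ) (ht : t ≤ n) (σ : Fin n → Fin k) : Fin t → Fin k :=
  fun a => σ ⟨a, a.isLt.trans_le ht⟩

def rightW {n k : ℕ} (t : ℕ) (σ : Fin n → Fin k) : Fin (n - t) → Fin k :=
  fun a => σ ⟨t + a, by omega⟩

def FirstOcc {m l n k : ℕ} (p : Fin m → Fin l) (σ : Fin n → Fin k) (i : ℕ) : Prop :=
  OccursAt p σ i ∧ ∀ i' < i, ¬ OccursAt p σ i'

def FirstEnd {m l t k : ℕ} (p : Fin m → Fin l) (w : Fin t → Fin k) : Prop :=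
  ∃ i, i + m = t ∧ FirstOcc p w i

theorem apply_mk_congr {n k : ℕ} (σ : Fin n → Fin k) {a b : ℕ} (h : a = b)
    (ha : a < n) (hb : b < n) : σ ⟨a, ha⟩ = σ ⟨b, hb⟩ := by subst h; rfl

theorem occursAt_leftW {m l n k t : ℕ} (p : Fin m → Fin l) (σ : Fin n → Fin k)
    (ht : t ≤ n) (i : ℕ) (him : i + m ≤ t) :
    OccursAt p (leftW t ht σ) i ↔ OccursAt p σ i := by
  constructor
  · rintro ⟨h, hc⟩
    exact ⟨him.trans ht, hc⟩
  · rintro ⟨h, hc⟩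
    exact ⟨him, hc⟩

theorem occursAt_rightW {m l n k t : ℕ} (p : Fin m → Fin l) (σ : Fin n → Fin k)
    (ht : t ≤ n) (i : ℕ) :
    OccursAt p (rightW t σ) i ↔ OccursAt p σ (t + i) := by
  have key : ∀ (h2 : t + i + m ≤ n) (a : Fin m),
      rightW t σ ⟨i + (a : ℕ), by have := a.isLt; omega⟩ =
        σ ⟨t + i + (a : ℕ), by have := a.isLt; omega⟩ := by
    intro h2 a
    show σ ⟨t + (i + (a : ℕ)), by have := a.isLt; omega⟩ =
      σ ⟨t + i + (a : ℕ), by have := a.isLt; omega⟩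
    exact apply_mk_congr σ (by omega) _ _
  constructor
  · rintro ⟨h, hc⟩
    have h2 : t + i + m ≤ n := by omega
    refine ⟨h2, fun a b => ?_⟩
    rw [← key h2 a, ← key h2 b]
    exact hc a b
  · rintro ⟨h, hc⟩
    refine ⟨by omega, fun a b => ?_⟩
    rw [key h a, key h b]
    exact hc a b

theorem containsMulti_succ_iff {s : ℕ} {m r : Fin (s + 1) → ℕ}
    (τ : ∀ j : Fin (s + 1), Fin (m j) → Fin (r j)) {n k : ℕ} (σ : Fin n → Fin k) :
    ContainsMulti τ σ ↔
      ∃ t, (∃ i, i + m 0 = t ∧ FirstOcc (τ 0) σ i) ∧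
        ContainsMulti (fun j : Fin s => τ j.succ) (rightW t σ) := by
  constructor
  · rintro ⟨i, hchain, hocc⟩
    have hex : ∃ i', OccursAt (τ 0) σ i' := ⟨i 0, hocc 0⟩
    set i₀ := Nat.find hex with hi₀
    have hocc0 : OccursAt (τ 0) σ i₀ := Nat.find_spec hex
    have hmin : ∀ i' < i₀, ¬ OccursAt (τ 0) σ i' := fun i' h => Nat.find_min hex h
    have hle : i₀ ≤ i 0 := Nat.find_min' hex (hocc 0)
    have hn0 : i₀ + m 0 ≤ n := by obtain ⟨h, -⟩ := id hocc0; exact h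
    set t := i₀ + m 0 with hts
    have ht : t ≤ n := hn0
    -- monotonicity along the chain
    have key : ∀ (v : ℕ) (h : v + 1 < s + 1), i 0 + m 0 ≤ i ⟨v + 1, h⟩ := by
      intro v
      induction v with
      | zero => intro h; exact hchain 0 h
      | succ v ihv =>
        intro h
        have hv : v + 1 < s + 1 := by omega
        calc i 0 + m 0 ≤ i ⟨v + 1, hv⟩ := ihv hv
          _ ≤ i ⟨v + 1, hv⟩ + m ⟨v + 1, hv⟩ := Nat.le_add_right _ _
          _ ≤ i ⟨v + 1 + 1, h⟩ := hchain ⟨v + 1, hv⟩ h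
    have htle : ∀ j : Fin s, t ≤ i j.succ := by
      rintro ⟨v, hv⟩
      have h1 : i 0 + m 0 ≤ i (Fin.succ (⟨v, hv⟩ : Fin s)) :=
        key v (show v + 1 < s + 1 by omega)
      omega
    refine ⟨t, ⟨i₀, rfl, hocc0, hmin⟩, fun j => i j.succ - t, ?_, ?_⟩
    · rintro ⟨v, hv⟩ h
      have hv1 : v + 1 < s := h
      show i (Fin.succ (⟨v, hv⟩ : Fin s)) - t + m (Fin.succ (⟨v, hv⟩ : Fin s)) ≤
        i (Fin.succ (⟨v + 1, hv1⟩ : Fin s)) - t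
      have h1 : t ≤ i (Fin.succ (⟨v, hv⟩ : Fin s)) := htle ⟨v, hv⟩
      have h2 : i (Fin.succ (⟨v, hv⟩ : Fin s)) + m (Fin.succ (⟨v, hv⟩ : Fin s)) ≤
          i (Fin.succ (⟨v + 1, hv1⟩ : Fin s)) :=
        hchain (Fin.succ ⟨v, hv⟩) (show v + 1 + 1 < s + 1 by omega)
      omega
    · intro j
      rw [occursAt_rightW _ _ ht]
      have h1 : t ≤ i j.succ := htle j
      have h2 : t + (i j.succ - t) = i j.succ := by omega
      rw [h2]
      exact hocc j.succ
  · rintro ⟨t, ⟨i₀, hit, h0occ, h0min⟩, i', hchain', hocc'⟩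
    have ht : t ≤ n := by obtain ⟨h, -⟩ := id h0occ; omega
    refine ⟨fun j => match j with
      | ⟨0, _⟩ => i₀
      | ⟨v + 1, hv⟩ => t + i' ⟨v, by omega⟩, ?_, ?_⟩
    · rintro ⟨v, hv⟩ h
      match v with
      | 0 =>
        have hs : 0 < s := Nat.lt_of_succ_lt_succ h
        show i₀ + m ⟨0, hv⟩ ≤ t + i' ⟨0, hs⟩
        have e : m ⟨0, hv⟩ = m 0 := rfl
        omega
      | v + 1 =>
        have hs1 : v + 1 < s := Nat.lt_of_succ_lt_succ h
        have hs0 : v < s := Nat.lt_of_succ_lt hs1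
        show t + i' ⟨v, hs0⟩ + m ⟨v + 1, hv⟩ ≤ t + i' ⟨v + 1, hs1⟩
        rw [Nat.add_assoc]
        exact Nat.add_le_add_left (hchain' ⟨v, hs0⟩ hs1) t
    · rintro ⟨v, hv⟩
      match v with
      | 0 =>
        show OccursAt (τ ⟨0, hv⟩) σ i₀
        exact h0occ
      | v + 1 =>
        have hs0 : v < s := Nat.lt_of_succ_lt_succ hv
        show OccursAt (τ ⟨v + 1, hv⟩) σ (t + i' ⟨v, hs0⟩)
        exact (occursAt_rightW (τ (Fin.succ (⟨v, hs0⟩ : Fin s))) σ ht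
          (i' ⟨v, hs0⟩)).1 (hocc' ⟨v, hs0⟩)

-- ### splitting a word and the product count

def joinW {n k : ℕ} (t : ℕ) (w : Fin t → Fin k) (v : Fin (n - t) → Fin k) :
    Fin n → Fin k :=
  fun a => if h : (a : ℕ) < t then w ⟨a, h⟩ else v ⟨(a : ℕ) - t, by omega⟩

theorem leftW_join {n k t : ℕ} (ht : t ≤ n) (w : Fin t → Fin k)
    (v : Fin (n - t) → Fin k) : leftW t ht (joinW t w v) = w := by
  funext a
  simp [leftW, joinW, a.isLt]

theorem rightW_join {n k t : ℕ} (ht : t ≤ n) (w : Fin t → Fin k)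
    (v : Fin (n - t) → Fin k) : rightW t (joinW t w v) = v := by
  funext a
  simp [rightW, joinW]

theorem join_left_right {n k t : ℕ} (ht : t ≤ n) (σ : Fin n → Fin k) :
    joinW t (leftW t ht σ) (rightW t σ) = σ := by
  funext a
  by_cases h : (a : ℕ) < t
  · simp [joinW, leftW, h]
  · have h2 : t + ((a : ℕ) - t) = (a : ℕ) := by omega
    simp [joinW, rightW, h, h2]

def splitEquiv (n k t : ℕ) (ht : t ≤ n) (P : (Fin t → Fin k) → Prop)
    (Q : (Fin (n - t) → Fin k) → Prop) :
    {σ : Fin n → Fin k // P (leftW t ht σ) ∧ Q (rightW t σ)} ≃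
      {w // P w} × {v // Q v} where
  toFun σ := (⟨leftW t ht σ.1, σ.2.1⟩, ⟨rightW t σ.1, σ.2.2⟩)
  invFun wv := ⟨joinW t wv.1.1 wv.2.1, by
    rw [leftW_join ht, rightW_join ht]; exact ⟨wv.1.2, wv.2.2⟩⟩
  left_inv σ := Subtype.ext (join_left_right ht σ.1)
  right_inv wv := by
    ext <;> simp [leftW_join ht, rightW_join ht]

theorem cnt_split (n k t : ℕ) (ht : t ≤ n) (P : (Fin t → Fin k) → Prop)
    (Q : (Fin (n - t) → Fin k) → Prop) :
    (Finset.univ.filter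
        (fun σ : Fin n → Fin k => P (leftW t ht σ) ∧ Q (rightW t σ))).card =
      cnt t k P * cnt (n - t) k Q := by
  rw [cnt, cnt, ← Fintype.card_subtype, ← Fintype.card_subtype, ← Fintype.card_subtype,
    ← Fintype.card_prod]
  exact Fintype.card_congr (splitEquiv n k t ht P Q)

theorem A_iff_firstEnd {m l : ℕ} (p : Fin m → Fin l) {n k t : ℕ} (ht : t ≤ n)
    (σ : Fin n → Fin k) :
    (∃ i, i + m = t ∧ FirstOcc p σ i) ↔ FirstEnd p (leftW t ht σ) := by
  constructor
  · rintro ⟨i, hit, hocc, hmin⟩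
    refine ⟨i, hit, (occursAt_leftW p σ ht i (by omega)).2 hocc, fun i' hi' hocc' => ?_⟩
    exact hmin i' hi' ((occursAt_leftW p σ ht i' (by omega)).1 hocc')
  · rintro ⟨i, hit, hocc, hmin⟩
    refine ⟨i, hit, (occursAt_leftW p σ ht i (by omega)).1 hocc, fun i' hi' hocc' => ?_⟩
    exact hmin i' hi' ((occursAt_leftW p σ ht i' (by omega)).2 hocc')

theorem A_unique {m l : ℕ} (p : Fin m → Fin l) {n k : ℕ} (σ : Fin n → Fin k)
    {t t' : ℕ} (h1 : ∃ i, i + m = t ∧ FirstOcc p σ i)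
    (h2 : ∃ i, i + m = t' ∧ FirstOcc p σ i) : t = t' := by
  obtain ⟨i, hit, hocc, hmin⟩ := h1
  obtain ⟨i', hit', hocc', hmin'⟩ := h2
  rcases lt_trichotomy i i' with h | h | h
  · exact absurd hocc (hmin' i h)
  · omega
  · exact absurd hocc' (hmin i' h)

theorem cnt_rec {s : ℕ} {m r : Fin (s + 1) → ℕ}
    (τ : ∀ j : Fin (s + 1), Fin (m j) → Fin (r j)) (n k : ℕ) :
    cnt n k (ContainsMulti τ) =
      ∑ t ∈ Finset.range (n + 1),
        cnt t k (FirstEnd (τ 0)) *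
          cnt (n - t) k (ContainsMulti (fun j : Fin s => τ j.succ)) := by
  have hdec : (Finset.univ.filter (fun σ : Fin n → Fin k => ContainsMulti τ σ)) =
      (Finset.range (n + 1)).biUnion (fun t => Finset.univ.filter
        (fun σ : Fin n → Fin k => (∃ i, i + m 0 = t ∧ FirstOcc (τ 0) σ i) ∧
          ContainsMulti (fun j : Fin s => τ j.succ) (rightW t σ))) := by
    ext σ
    simp only [Finset.mem_biUnion, Finset.mem_filter, Finset.mem_univ, true_and,
      Finset.mem_range]
    rw [containsMulti_succ_iff]
    constructor
    · rintro ⟨t, hA, hB⟩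
      have : t ≤ n := by
        obtain ⟨i, hit, ⟨hb, -⟩, -⟩ := hA
        omega
      exact ⟨t, by omega, hA, hB⟩
    · rintro ⟨t, -, hA, hB⟩
      exact ⟨t, hA, hB⟩
  rw [cnt, hdec, Finset.card_biUnion]
  · apply Finset.sum_congr rfl
    intro t htmem
    have ht : t ≤ n := by
      simp only [Finset.mem_range] at htmem; omega
    have : (Finset.univ.filter
        (fun σ : Fin n → Fin k => (∃ i, i + m 0 = t ∧ FirstOcc (τ 0) σ i) ∧
          ContainsMulti (fun j : Fin s => τ j.succ) (rightW t σ))) =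
        (Finset.univ.filter
        (fun σ : Fin n → Fin k => FirstEnd (τ 0) (leftW t ht σ) ∧
          ContainsMulti (fun j : Fin s => τ j.succ) (rightW t σ))) := by
      apply Finset.filter_congr
      intro σ _
      rw [A_iff_firstEnd (τ 0) ht σ]
    rw [this, cnt_split n k t ht]
  · intro t _ t' _ hne
    rw [Function.onFun, Finset.disjoint_left]
    intro σ hσ hσ'
    simp only [Finset.mem_filter, Finset.mem_univ, true_and] at hσ hσ'
    exact hne (A_unique (τ 0) σ hσ.1 hσ'.1)

theorem containsMulti_zero {m r : Fin 0 → ℕ} (τ : ∀ j : Fin 0, Fin (m j) → Fin (r j))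
    {n k : ℕ} (σ : Fin n → Fin k) : ContainsMulti τ σ :=
  ⟨Fin.elim0, fun j => j.elim0, fun j => j.elim0⟩

theorem cnt_eq_coeff (k : ℕ) : ∀ (s : ℕ) (m r : Fin s → ℕ)
    (τ : ∀ j : Fin s, Fin (m j) → Fin (r j)) (n : ℕ),
    cnt n k (ContainsMulti τ) =
      PowerSeries.coeff (R := ℕ) n
        ((∏ j : Fin s, PowerSeries.mk fun t => cnt t k (FirstEnd (τ j))) *
          PowerSeries.mk fun u => k ^ u) := by
  intro s
  induction s with
  | zero =>
    intro m r τ n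
    have h1 : ∀ σ : Fin n → Fin k, ContainsMulti τ σ := fun σ => containsMulti_zero τ σ
    have h2 : (Finset.univ.filter (fun σ : Fin n → Fin k => ContainsMulti τ σ)) =
        Finset.univ := by
      apply Finset.filter_true_of_mem
      intro σ _
      exact h1 σ
    rw [cnt, h2]
    simp [PowerSeries.coeff_mk, Finset.card_univ]
  | succ s ih =>
    intro m r τ n
    rw [cnt_rec τ n k, Fin.prod_univ_succ, mul_assoc, PowerSeries.coeff_mul,
      Finset.Nat.sum_antidiagonal_eq_sum_range_succ_mk]
    apply Finset.sum_congr rfl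
    intro t _
    rw [PowerSeries.coeff_mk, ih _ _ (fun j : Fin s => τ j.succ) (n - t)]

theorem card_not (n k : ℕ) (P : (Fin n → Fin k) → Prop) :
    Nat.card {σ : Fin n → Fin k // ¬ P σ} = k ^ n - cnt n k P := by
  rw [Nat.card_eq_fintype_card, Fintype.card_subtype]
  have h := Finset.card_filter_add_card_filter_not
    (s := (Finset.univ : Finset (Fin n → Fin k))) (p := P)
  have h2 : (Finset.univ : Finset (Fin n → Fin k)).card = k ^ n := by
    simp [Finset.card_univ]
  rw [cnt]
  omega


theorem stmt11 (s : ℕ) (m r : Fin (s + 1) → ℕ)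
    (τ : ∀ j : Fin (s + 1), Fin (m j) → Fin (r j)) (e : Equiv.Perm (Fin (s + 1)))
    (n k : ℕ) (hk : 1 ≤ k) :
    Nat.card {σ : Fin n → Fin k // ¬ ContainsMulti τ σ} =
      Nat.card {σ : Fin n → Fin k // ¬ ContainsMulti (fun j => τ (e j)) σ} := by
  rw [card_not, card_not, cnt_eq_coeff k (s + 1) m r τ n,
    cnt_eq_coeff k (s + 1) _ _ (fun j => τ (e j)) n]
  have hprod : (∏ j : Fin (s + 1),
      PowerSeries.mk fun t => (cnt t k (FirstEnd (τ (e j))) : ℕ)) =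
      ∏ j : Fin (s + 1), PowerSeries.mk fun t => (cnt t k (FirstEnd (τ j)) : ℕ) :=
    Equiv.prod_comp e (fun j => PowerSeries.mk fun t => (cnt t k (FirstEnd (τ j)) : ℕ))
  rw [hprod]

end
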